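/- Let $m_1,\dots,m_n$ be nonnegative real numbers with $M = \max_i m_i > 1$. Then there exists a constant $C' > 0$ such that for all $0 < \delta < 1$, $\int_{\{x \in (0,1)^n : \delta/(x_1^{m_1}\cdots x_n^{m_n}) < 1\}} \frac{\delta}{x_1^{m_1}\cdots x_n^{m_n}}\,dx \le C'\,|\{x \in (0,1)^n : x_1^{m_1}\cdots x_n^{m_n} < \delta\}|$. -/

import Mathlib

open MeasureTheory Set

lemma stmt3_scale {n : ℕ} (m : Fin n → ℝ) (hm : ∀ i, 0 ≤ m i)
    (M : ℝ) (hMub : ∀ i, m i ≤ M) (i₀ : Fin n) (hi₀ : m i₀ = M)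
    (δ c : ℝ) (hc0 : 0 < c) (hc1 : c ≤ 1) :
    volume {x : Fin n → ℝ | (∀ i, x i ∈ Set.Ioo (0:ℝ) 1) ∧ ∏ i, x i ^ m i < δ / c ^ M}
      ≤ ENNReal.ofReal c⁻¹ *
        volume {x : Fin n → ℝ | (∀ i, x i ∈ Set.Ioo (0:ℝ) 1) ∧ ∏ i, x i ^ m i < δ} := by
  classical
  set d : Fin n → ℝ := fun j => if j = i₀ then c else 1 with hd
  have hd0 : ∀ j, 0 < d j := by
    intro j; by_cases h : j = i₀ <;> simp [hd, h, hc0]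
  have hd1 : ∀ j, d j ≤ 1 := by
    intro j; by_cases h : j = i₀ <;> simp [hd, h, hc1]
  set L : (Fin n → ℝ) →ₗ[ℝ] (Fin n → ℝ) := Matrix.toLin' (Matrix.diagonal d) with hL
  have hLdet : LinearMap.det L = c := by
    rw [hL, LinearMap.det_toLin', Matrix.det_diagonal]
    simp [hd]
  have hLapp : ∀ (x : Fin n → ℝ) (j : Fin n), L x j = d j * x j := by
    intro x j
    simp [hL, Matrix.toLin'_apply, Matrix.mulVec_diagonal]
  set A := {x : Fin n → ℝ | (∀ i, x i ∈ Set.Ioo (0:ℝ) 1) ∧ ∏ i, x i ^ m i < δ / c ^ M}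
  set B := {x : Fin n → ℝ | (∀ i, x i ∈ Set.Ioo (0:ℝ) 1) ∧ ∏ i, x i ^ m i < δ}
  have himg : L '' A ⊆ B := by
    rintro _ ⟨x, ⟨hx1, hx2⟩, rfl⟩
    constructor
    · intro i
      rw [hLapp]
      constructor
      · exact mul_pos (hd0 i) (hx1 i).1
      · calc d i * x i ≤ 1 * x i := by
              exact mul_le_mul_of_nonneg_right (hd1 i) (le_of_lt (hx1 i).1)
          _ = x i := one_mul _
          _ < 1 := (hx1 i).2
    · have hprod : ∏ i, (L x) i ^ m i = c ^ M * ∏ i, x i ^ m i := by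
        have : ∀ i, (L x) i ^ m i = d i ^ m i * x i ^ m i := by
          intro i
          rw [hLapp]
          exact Real.mul_rpow (le_of_lt (hd0 i)) (le_of_lt (hx1 i).1)
        rw [Finset.prod_congr rfl (fun i _ => this i), Finset.prod_mul_distrib]
        congr 1
        have : ∀ i, d i ^ m i = if i = i₀ then c ^ M else 1 := by
          intro i
          by_cases h : i = i₀ <;> simp [hd, h, hi₀, Real.one_rpow]
        rw [Finset.prod_congr rfl (fun i _ => this i)]
        simp
      rw [hprod]
      have hcM : 0 < c ^ M := Real.rpow_pos_of_pos hc0 M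
      calc c ^ M * ∏ i, x i ^ m i < c ^ M * (δ / c ^ M) :=
            mul_lt_mul_of_pos_left hx2 hcM
        _ = δ := by field_simp
  have hmeasA : volume (L '' A) = ENNReal.ofReal c * volume A := by
    rw [Measure.addHaar_image_linearMap, hLdet, abs_of_pos hc0]
  have hle : ENNReal.ofReal c * volume A ≤ volume B := by
    rw [← hmeasA]; exact measure_mono himg
  rw [ENNReal.ofReal_inv_of_pos hc0]
  rw [← ENNReal.div_eq_inv_mul]
  rw [ENNReal.le_div_iff_mul_le (Or.inl (by simp [hc0])) (Or.inl ENNReal.ofReal_ne_top)]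
  rwa [mul_comm]

/-- Lemma 3.1(d): when `M = max m i > 1`, the integral of `δ / x^m` over the region of the
unit cube where `δ / x^m < 1` is dominated by the measure of the sublevel set `{x^m < δ}`. -/
theorem stmt3 {n : ℕ} (m : Fin n → ℝ) (hm : ∀ i, 0 ≤ m i)
    (M : ℝ) (hM : IsGreatest (Set.range m) M) (hM1 : 1 < M) :
    ∃ C' : ℝ, 0 < C' ∧ ∀ δ : ℝ, 0 < δ → δ < 1 →
      (∫ x in {x : Fin n → ℝ | (∀ i, x i ∈ Set.Ioo (0:ℝ) 1) ∧
          δ / ∏ i, x i ^ m i < 1}, δ / ∏ i, x i ^ m i) ≤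
        C' * (volume {x : Fin n → ℝ | (∀ i, x i ∈ Set.Ioo (0:ℝ) 1) ∧
          ∏ i, x i ^ m i < δ}).toReal := by
  classical
  obtain ⟨i₀, hi₀⟩ := hM.1
  have hMub : ∀ i, m i ≤ M := fun i => hM.2 ⟨i, rfl⟩
  have hM0 : 0 < M := lt_trans one_pos hM1
  refine ⟨M / (M - 1), div_pos hM0 (by linarith), ?_⟩
  intro δ hδ0 hδ1
  set f : (Fin n → ℝ) → ℝ := fun x => ∏ i, x i ^ m i with hf
  have hfc : Continuous f := by
    apply continuous_finset_prod
    intro i _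
    exact (continuous_apply i).rpow_const (fun x => Or.inr (hm i))
  have hgm : Measurable fun x => δ / f x := measurable_const.div hfc.measurable
  set E := {x : Fin n → ℝ | (∀ i, x i ∈ Set.Ioo (0:ℝ) 1) ∧ δ / f x < 1} with hE
  set S := {x : Fin n → ℝ | (∀ i, x i ∈ Set.Ioo (0:ℝ) 1) ∧ f x < δ} with hS
  have hcube_eq : {x : Fin n → ℝ | ∀ i, x i ∈ Set.Ioo (0:ℝ) 1} =
      Set.pi Set.univ (fun _ : Fin n => Set.Ioo (0:ℝ) 1) := by
    ext x; simp [Set.mem_pi]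
  have hcube_meas : MeasurableSet {x : Fin n → ℝ | ∀ i, x i ∈ Set.Ioo (0:ℝ) 1} := by
    rw [hcube_eq]; exact MeasurableSet.univ_pi (fun i => measurableSet_Ioo)
  have hcube_vol : volume {x : Fin n → ℝ | ∀ i, x i ∈ Set.Ioo (0:ℝ) 1} = 1 := by
    rw [hcube_eq, volume_pi_pi]
    simp
  have hEmeas : MeasurableSet E := by
    have : E = {x : Fin n → ℝ | ∀ i, x i ∈ Set.Ioo (0:ℝ) 1} ∩ {x | δ / f x < 1} := rfl
    rw [this]
    exact hcube_meas.inter (measurableSet_lt hgm measurable_const)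
  have hfpos : ∀ x : Fin n → ℝ, (∀ i, x i ∈ Set.Ioo (0:ℝ) 1) → 0 < f x := by
    intro x hx
    exact Finset.prod_pos fun i _ => Real.rpow_pos_of_pos (hx i).1 _
  have hEfin : volume E ≤ 1 := by
    rw [← hcube_vol]; exact measure_mono (fun x hx => hx.1)
  have hSfin : volume S < ⊤ := lt_of_le_of_lt
    (le_trans (measure_mono (fun x hx => hx.1)) hcube_vol.le) ENNReal.one_lt_top
  have hEne : volume E ≠ ⊤ := (lt_of_le_of_lt hEfin ENNReal.one_lt_top).ne
  have hint : Integrable (fun x => δ / f x) (volume.restrict E) := by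
    apply Measure.integrableOn_of_bounded (M := 1) hEne hgm.aestronglyMeasurable
    filter_upwards [ae_restrict_mem hEmeas] with x hx
    rw [Real.norm_eq_abs, abs_of_nonneg (div_nonneg hδ0.le (hfpos x hx.1).le)]
    exact hx.2.le
  have hnn : 0 ≤ᵐ[volume.restrict E] fun x => δ / f x := by
    filter_upwards [ae_restrict_mem hEmeas] with x hx
    exact div_nonneg hδ0.le (hfpos x hx.1).le
  rw [show (∫ x in E, δ / ∏ i, x i ^ m i) = ∫ x, (fun x => δ / f x) x ∂(volume.restrict E) from rfl]
  rw [hint.integral_eq_integral_meas_lt hnn]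
  set V := (volume S).toReal with hV
  have hV0 : 0 ≤ V := ENNReal.toReal_nonneg
  set F : ℝ → ℝ := fun t => ((volume.restrict E) {a | t < δ / f a}).toReal with hF
  have hgoal : ∫ (t : ℝ) in Set.Ioi 0, (volume.restrict E).real {a | t < δ / f a}
      = ∫ (t : ℝ) in Set.Ioi 0, F t := rfl
  rw [hgoal]
  have hres : ∀ t : ℝ, (volume.restrict E) {a | t < δ / f a} = volume ({a | t < δ / f a} ∩ E) :=
    fun t => Measure.restrict_apply (measurableSet_lt measurable_const hgm)
  have hFbound : ∀ t : ℝ, t ∈ Set.Ioc (0:ℝ) 1 → F t ≤ t ^ (-(1/M)) * V := by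
    intro t ht
    have hc0 : 0 < t ^ (1/M) := Real.rpow_pos_of_pos ht.1 _
    have hc1 : t ^ (1/M) ≤ 1 := Real.rpow_le_one ht.1.le ht.2 (by positivity)
    have hcM : (t ^ (1/M)) ^ M = t := by
      rw [← Real.rpow_mul ht.1.le, one_div_mul_cancel hM0.ne', Real.rpow_one]
    have hsub : {a | t < δ / f a} ∩ E ⊆
        {x : Fin n → ℝ | (∀ i, x i ∈ Set.Ioo (0:ℝ) 1) ∧ f x < δ / (t ^ (1/M)) ^ M} := by
      rintro x ⟨hx1, hx2⟩
      refine ⟨hx2.1, ?_⟩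
      rw [hcM]
      have hfx : 0 < f x := hfpos x hx2.1
      have h1 : t < δ / f x := hx1
      rw [lt_div_iff₀ hfx] at h1
      rw [lt_div_iff₀' ht.1]
      exact h1
    have key : volume ({a | t < δ / f a} ∩ E) ≤ ENNReal.ofReal (t ^ (1/M))⁻¹ * volume S := by
      calc volume ({a | t < δ / f a} ∩ E)
          ≤ volume {x : Fin n → ℝ | (∀ i, x i ∈ Set.Ioo (0:ℝ) 1) ∧ f x < δ / (t ^ (1/M)) ^ M} :=
            measure_mono hsub
        _ ≤ ENNReal.ofReal (t ^ (1/M))⁻¹ * volume S :=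
            stmt3_scale m hm M hMub i₀ hi₀ δ (t ^ (1/M)) hc0 hc1
    show ((volume.restrict E) {a | t < δ / f a}).toReal ≤ t ^ (-(1/M)) * V
    rw [hres t]
    have hne : ENNReal.ofReal (t ^ (1/M))⁻¹ * volume S ≠ ⊤ :=
      ENNReal.mul_ne_top ENNReal.ofReal_ne_top hSfin.ne
    calc (volume ({a | t < δ / f a} ∩ E)).toReal
        ≤ (ENNReal.ofReal (t ^ (1/M))⁻¹ * volume S).toReal := ENNReal.toReal_mono hne key
      _ = (t ^ (1/M))⁻¹ * V := by
          rw [ENNReal.toReal_mul, ENNReal.toReal_ofReal (by positivity)]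
      _ = t ^ (-(1/M)) * V := by rw [← Real.rpow_neg ht.1.le]
  have hFzero : ∀ t : ℝ, 1 ≤ t → F t = 0 := by
    intro t ht
    show ((volume.restrict E) {a | t < δ / f a}).toReal = 0
    rw [hres t]
    have : {a | t < δ / f a} ∩ E = ∅ := by
      ext x
      simp only [Set.mem_inter_iff, Set.mem_setOf_eq, Set.mem_empty_iff_false, iff_false]
      rintro ⟨h1, h2⟩
      exact absurd (lt_trans h1 h2.2) (not_lt.mpr ht)
    rw [this, measure_empty, ENNReal.toReal_zero]
  have hFanti : Antitone F := by
    intro s t hst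
    apply ENNReal.toReal_mono
    · exact ((measure_mono (Set.subset_univ _)).trans_lt
        (lt_of_le_of_lt (by simpa using hEfin) ENNReal.one_lt_top)).ne
    · exact measure_mono (fun a ha => lt_of_le_of_lt hst ha)
  have hFle1 : ∀ t, ‖F t‖ ≤ 1 := by
    intro t
    show ‖((volume.restrict E) {a | t < δ / f a}).toReal‖ ≤ 1
    rw [Real.norm_eq_abs, abs_of_nonneg ENNReal.toReal_nonneg]
    have h2 : (volume.restrict E) {a | t < δ / f a} ≤ 1 := by
      refine le_trans (le_trans (measure_mono (Set.subset_univ _)) ?_) hEfin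
      simp [Measure.restrict_apply_univ]
    exact le_trans (ENNReal.toReal_mono ENNReal.one_ne_top h2) (by simp)
  have hFint1 : IntegrableOn F (Set.Ioc 0 1) := by
    apply Measure.integrableOn_of_bounded (M := 1) (by simp : volume (Set.Ioc (0:ℝ) 1) ≠ ⊤)
      hFanti.measurable.aestronglyMeasurable
    exact ae_of_all _ hFle1
  have hFint2 : IntegrableOn F (Set.Ioi 1) := by
    have heq : Set.EqOn F (fun _ => (0:ℝ)) (Set.Ioi 1) :=
      fun t ht => hFzero t (le_of_lt (Set.mem_Ioi.mp ht))
    exact (integrableOn_congr_fun heq measurableSet_Ioi).mpr (integrableOn_zero)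
  have hz : ∫ t in Set.Ioi (1:ℝ), F t = 0 :=
    setIntegral_eq_zero_of_forall_eq_zero fun t ht => hFzero t (le_of_lt (Set.mem_Ioi.mp ht))
  have hsplit : ∫ t in Set.Ioi (0:ℝ), F t = ∫ t in Set.Ioc (0:ℝ) 1, F t := by
    rw [← Set.Ioc_union_Ioi_eq_Ioi (zero_le_one : (0:ℝ) ≤ 1)]
    rw [setIntegral_union (Set.Ioc_disjoint_Ioi le_rfl) measurableSet_Ioi hFint1 hFint2]
    rw [hz, add_zero]
  rw [hsplit]
  have h1 : (-1 : ℝ) < -(1/M) := by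
    rw [neg_lt_neg_iff, div_lt_one hM0]; exact hM1
  have hmajint : IntegrableOn (fun t : ℝ => t ^ (-(1/M)) * V) (Set.Ioc 0 1) := by
    have := intervalIntegral.intervalIntegrable_rpow' (a := 0) (b := 1) h1
    rw [intervalIntegrable_iff_integrableOn_Ioc_of_le zero_le_one] at this
    exact this.mul_const V
  have hmono : ∫ t in Set.Ioc (0:ℝ) 1, F t ≤ ∫ t in Set.Ioc (0:ℝ) 1, t ^ (-(1/M)) * V :=
    setIntegral_mono_on hFint1 hmajint measurableSet_Ioc hFbound
  refine le_trans hmono ?_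
  have hcomp : ∫ t in Set.Ioc (0:ℝ) 1, t ^ (-(1/M)) * V = (M / (M-1)) * V := by
    rw [MeasureTheory.integral_mul_const]
    rw [← intervalIntegral.integral_of_le zero_le_one]
    rw [integral_rpow (Or.inl h1)]
    have hne : -(1/M) + 1 ≠ 0 := by
      have h2 : (0:ℝ) < -(1/M) + 1 := by
        have : 1/M < 1 := by rw [div_lt_one hM0]; exact hM1
        linarith
      exact h2.ne'
    rw [Real.one_rpow, Real.zero_rpow hne]
    have heq : ((1:ℝ) - 0) / (-(1/M) + 1) = M / (M - 1) := by
      rw [sub_zero]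
      field_simp
      ring_nf
    rw [heq]
  rw [hcomp]
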